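/- Let Γ = (H, V, i, f, g) be a dual graph with edge contraction Contr Γ = (H', V', g'). Then the total genus is preserved: if Γ is connected, 2·g(Contr Γ) − 2 + n(Contr Γ) = Σ_{v ∈ V} (2g(v) − 2 + n(v)) + 2·|E(Γ)|, where g(Contr Γ) denotes the genus of the single vertex of the contracted graph when all edges are contracted, n denotes the number of legs, and |E(Γ)| the number of edges. Equivalently, for a connected graph with first Betti number b₁(Γ), the genus of the fully contracted graph equals b₁(Γ) + Σ_{v ∈ V} g(v). -/

import Mathlib

/-- For a connected dual graph, the genus `g'` of the fully contracted graph,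
defined by `2g' - 2 + #legs = ∑_v (2 g(v) - 2 + n(v))`, equals
`b₁(Γ) + ∑_v g(v)` where `b₁(Γ) = #edges - #vertices + 1`. -/
theorem stmt_0 (H V : Type) [Fintype H] [DecidableEq H] [Fintype V] [DecidableEq V]
    (ι : H → H) (hι : ∀ h, ι (ι h) = h) (f : H → V) (g : V → ℕ)
    (hconn : ∀ a b : V, Relation.ReflTransGen (fun x y => ∃ h : H, f h = x ∧ f (ι h) = y) a b)
    (legs edges : ℕ)
    (hlegs : legs = (Finset.univ.filter fun h : H => ι h = h).card)
    (hedges : 2 * edges = (Finset.univ.filter fun h : H => ι h ≠ h).card)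
    (g' : ℕ)
    (hg' : 2 * (g' : ℤ) - 2 + (legs : ℤ) =
      ∑ v : V, (2 * (g v : ℤ) - 2 + ((Finset.univ.filter fun h : H => f h = v).card : ℤ))) :
    (g' : ℤ) = ((edges : ℤ) - Fintype.card V + 1) + ∑ v : V, (g v : ℤ) := by
  have hpart : legs + 2 * edges = Fintype.card H := by
    rw [hlegs, hedges]
    simpa using Finset.card_filter_add_card_filter_not
      (s := Finset.univ) (p := fun h : H => ι h = h)
  have hfib : Fintype.card H = ∑ v : V, (Finset.univ.filter fun h : H => f h = v).card := by
    rw [← Finset.card_univ]; exact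
      Finset.card_eq_sum_card_fiberwise (fun (h : H) _ => Finset.mem_univ (f h))
  have hsum : ∑ v : V, (2 * (g v : ℤ) - 2 + ((Finset.univ.filter fun h : H => f h = v).card : ℤ))
      = 2 * ∑ v : V, (g v : ℤ) - 2 * (Fintype.card V : ℤ) + (Fintype.card H : ℤ) := by
    rw [Finset.sum_add_distrib, Finset.sum_sub_distrib]
    push_cast [hfib, ← Finset.mul_sum]
    simp [Finset.card_univ, mul_comm]
  have h2 : (legs : ℤ) + 2 * (edges : ℤ) = (Fintype.card H : ℤ) := by exact_mod_cast hpart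
  rw [hsum] at hg'
  linarith
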